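/- Let X be a finite set and let A be an abelian subgroup of Sym(X) that is the automorphism group of some k-coloured graph on X (A ∈ GR). Then A is 2-orbit-closed, and for every orbit O of A, if the factor group A_O/A_O^* is an elementary abelian 2-group, then A_O is an elementary abelian 2-group (i.e., a(a(x)) = x for all a ∈ A and x ∈ O). -/

import Mathlib

/-- The orbit of a point `x` under a set `G` of permutations of `X`. -/
def orbitOf {X : Type*} (G : Set (Equiv.Perm X)) (x : X) : Set X :=
  {y | ∃ a ∈ G, a x = y}

/-- A permutation `σ` is 2-orbit-compatible with `G` if for every pair of orbits
`O` and `Q` of `G` there is an element of `G` agreeing with `σ` on `O ∪ Q`. -/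
def TwoOrbitCompatible {X : Type*} (G : Set (Equiv.Perm X)) (σ : Equiv.Perm X) : Prop :=
  ∀ x y : X, ∃ a ∈ G, ∀ z ∈ orbitOf G x ∪ orbitOf G y, σ z = a z

/-- A subgroup `A ≤ Sym(X)` is 2-orbit-closed if every permutation that is
2-orbit-compatible with `A` belongs to `A`. -/
def TwoOrbitClosed {X : Type*} (A : Subgroup (Equiv.Perm X)) : Prop :=
  ∀ σ : Equiv.Perm X, TwoOrbitCompatible (A : Set (Equiv.Perm X)) σ → σ ∈ A

/-- `A` is precisely the automorphism group of the `k`-coloured graph `γ` on `X`. -/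
def IsColGraphAutGroup {X : Type*} {k : ℕ} (γ : Sym2 X → Fin k)
    (A : Subgroup (Equiv.Perm X)) : Prop :=
  ∀ σ : Equiv.Perm X, σ ∈ A ↔ ∀ x y : X, x ≠ y → γ s(σ x, σ y) = γ s(x, y)

/-- `A ∈ GR`: `A` is the automorphism group of some coloured graph on `X`. -/
def InGR {X : Type*} (A : Subgroup (Equiv.Perm X)) : Prop :=
  ∃ k : ℕ, 1 ≤ k ∧ ∃ γ : Sym2 X → Fin k, IsColGraphAutGroup γ A

/-- `A ∈ GR(4)`: `A` is the automorphism group of some 4-coloured graph on `X`. -/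
def InGR4 {X : Type*} (A : Subgroup (Equiv.Perm X)) : Prop :=
  ∃ γ : Sym2 X → Fin 4, IsColGraphAutGroup γ A

/-- The factor group `A_O / A_O^*` is an elementary abelian 2-group: for every `a ∈ A`,
the restriction of `a²` to `O` is the restriction of some element of `A` that fixes
every point outside `O`. -/
def FactorIsElem2 {X : Type*} (A : Subgroup (Equiv.Perm X)) (O : Set X) : Prop :=
  ∀ a ∈ A, ∃ b ∈ A, (∀ z ∈ O, b z = a (a z)) ∧ ∀ z ∉ O, b z = z

theorem Equiv.Perm.apply_inv_self {α : Type*} (f : Equiv.Perm α) (x : α) : f (f⁻¹ x) = x :=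
  Equiv.apply_symm_apply f x

theorem Equiv.Perm.inv_apply_self {α : Type*} (f : Equiv.Perm α) (x : α) : f⁻¹ (f x) = x :=
  Equiv.symm_apply_apply f x

/-- If an abelian subgroup `A ≤ Sym(X)` is the automorphism group of a coloured graph,
then `A` is 2-orbit-closed and, for every orbit `O` of `A`, if `A_O / A_O^*` is an
elementary abelian 2-group then so is `A_O`. -/
theorem statement4 (X : Type*) [Fintype X] (A : Subgroup (Equiv.Perm X))
    (hab : ∀ a ∈ A, ∀ b ∈ A, a * b = b * a) (hGR : InGR A) :
    TwoOrbitClosed A ∧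
      ∀ x : X, FactorIsElem2 A (orbitOf (A : Set (Equiv.Perm X)) x) →
        ∀ a ∈ A, ∀ z ∈ orbitOf (A : Set (Equiv.Perm X)) x, a (a z) = z := by
  obtain ⟨k, hk, γ, hγ⟩ := hGR
  -- regularity: an element of A fixing x fixes every point of the orbit of x
  have reg : ∀ x : X, ∀ c ∈ A, c x = x →
      ∀ y ∈ orbitOf (A : Set (Equiv.Perm X)) x, c y = y := by
    intro x c hc hcx y hy
    obtain ⟨e, he, hex⟩ := hy
    have h := DFunLike.congr_fun (hab c hc e he) x
    simp only [Equiv.Perm.mul_apply] at h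
    rw [← hex, h, hcx]
  constructor
  · intro σ hσ
    rw [hγ]
    intro u v huv
    obtain ⟨a, haA, ha⟩ := hσ u v
    have hu : σ u = a u := ha u (Or.inl ⟨1, one_mem _, rfl⟩)
    have hv : σ v = a v := ha v (Or.inr ⟨1, one_mem _, rfl⟩)
    rw [hu, hv]
    exact (hγ a).mp haA u v huv
  · intro x hfac a haA z hz
    set O := orbitOf (A : Set (Equiv.Perm X)) x with hO
    classical
    set f : X → X := fun z => if h : z ∈ O then (Exists.choose h)⁻¹ x else z with hf
    have fdef : ∀ c, c ∈ A → ∀ w, c x = w → f w = c⁻¹ x := by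
      intro c hc w hcw
      have hw : w ∈ O := ⟨c, hc, hcw⟩
      have : f w = (Exists.choose hw)⁻¹ x := dif_pos hw
      rw [this]
      obtain ⟨hdA, hdx⟩ := hw.choose_spec
      set d := Exists.choose hw with hd
      have hfix : (c⁻¹ * d) x = x := by
        rw [Equiv.Perm.mul_apply, hdx, ← hcw, Equiv.Perm.inv_apply_self]
      have := reg x (c⁻¹ * d) (mul_mem (inv_mem hc) hdA) hfix (d⁻¹ x)
        ⟨d⁻¹, inv_mem hdA, rfl⟩
      rw [Equiv.Perm.mul_apply, Equiv.Perm.apply_inv_self] at this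
      exact this.symm
    have fout : ∀ w, w ∉ O → f w = w := fun w hw => dif_neg hw
    have finv : ∀ w, f (f w) = w := by
      intro w
      by_cases hw : w ∈ O
      · obtain ⟨c, hc, hcx⟩ := hw
        rw [fdef c hc w hcx, fdef c⁻¹ (inv_mem hc) (c⁻¹ x) rfl, inv_inv, hcx]
      · rw [fout w hw, fout w hw]
    have finj : ∀ u v, u ≠ v → f u ≠ f v := by
      intro u v huv h
      exact huv (by rw [← finv u, h, finv v])
    set σ : Equiv.Perm X := ⟨f, f, finv, finv⟩ with hσ
    have hpres : ∀ u v : X, u ≠ v → γ s(f u, f v) = γ s(u, v) := by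
      intro u v huv
      by_cases hu : u ∈ O <;> by_cases hv : v ∈ O
      · obtain ⟨c, hc, hcx⟩ := hu
        obtain ⟨d, hd, hdx⟩ := hv
        rw [fdef c hc u hcx, fdef d hd v hdx]
        have key := (hγ (c * d)).mp (mul_mem hc hd) (c⁻¹ x) (d⁻¹ x)
          (by
            have := finj u v huv
            rwa [fdef c hc u hcx, fdef d hd v hdx] at this)
        have e1 : (c * d) (c⁻¹ x) = v := by
          rw [hab c hc d hd, Equiv.Perm.mul_apply, Equiv.Perm.apply_inv_self, hdx]
        have e2 : (c * d) (d⁻¹ x) = u := by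
          rw [Equiv.Perm.mul_apply, Equiv.Perm.apply_inv_self, hcx]
        rw [e1, e2] at key
        rw [← key, Sym2.eq_swap]
      · obtain ⟨c, hc, hcx⟩ := hu
        rw [fdef c hc u hcx, fout v hv]
        obtain ⟨b, hbA, hbO, hbout⟩ := hfac c hc
        have key := (hγ b).mp hbA (c⁻¹ x) v
          (by
            intro h
            exact hv (h ▸ ⟨c⁻¹, inv_mem hc, rfl⟩))
        have e1 : b (c⁻¹ x) = u := by
          rw [hbO (c⁻¹ x) ⟨c⁻¹, inv_mem hc, rfl⟩, Equiv.Perm.apply_inv_self, hcx]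
        have e2 : b v = v := hbout v hv
        rw [e1, e2] at key
        exact key.symm
      · obtain ⟨d, hd, hdx⟩ := hv
        rw [fdef d hd v hdx, fout u hu]
        obtain ⟨b, hbA, hbO, hbout⟩ := hfac d hd
        have key := (hγ b).mp hbA u (d⁻¹ x)
          (by
            intro h
            exact hu (h ▸ ⟨d⁻¹, inv_mem hd, rfl⟩))
        have e1 : b (d⁻¹ x) = v := by
          rw [hbO (d⁻¹ x) ⟨d⁻¹, inv_mem hd, rfl⟩, Equiv.Perm.apply_inv_self, hdx]
        have e2 : b u = u := hbout u hu
        rw [e1, e2] at key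
        exact key.symm
      · rw [fout u hu, fout v hv]
    have hσA : σ ∈ A := (hγ σ).mpr hpres
    have hσx : σ x = x := by
      show f x = x
      rw [fdef 1 (one_mem _) x (Equiv.Perm.one_apply x), inv_one, Equiv.Perm.one_apply]
    have h1 : σ (a x) = a x := reg x σ hσA hσx (a x) ⟨a, haA, rfl⟩
    have h2 : f (a x) = a⁻¹ x := fdef a haA (a x) rfl
    have h3 : a⁻¹ x = a x := by rw [← h2]; exact h1
    have h4 : (a * a) x = x := by
      rw [Equiv.Perm.mul_apply, ← h3, Equiv.Perm.apply_inv_self]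
    have := reg x (a * a) (mul_mem haA haA) h4 z hz
    rwa [Equiv.Perm.mul_apply] at this
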